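/- Define R₀ : D → D in polar coordinates by R₀(t e^{iθ}) = t·exp(i(θ + arccos((1+t²)/2))). Then for every w ∈ D \ {0}, the hyperbolic triangle with vertices 0, w, and R₀(w) is equilateral, i.e. ρ(0,w) = ρ(0,R₀(w)) = ρ(w,R₀(w)). -/

import Mathlib

open Complex

/-- The hyperbolic metric on the unit disk:
ρ(z,w) = log((1+|(z−w)/(1−conj(w)z)|)/(1−|(z−w)/(1−conj(w)z)|)). -/
noncomputable def hypDist (z w : ℂ) : ℝ :=
  Real.log ((1 + ‖(z - w) / (1 - (starRingEnd ℂ) w * z)‖) /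
    (1 - ‖(z - w) / (1 - (starRingEnd ℂ) w * z)‖))

/-- The rotation-type map R₀(t e^{iθ}) = t·exp(i(θ + arccos((1+t²)/2))), written
coordinate-free as R₀(z) = z·exp(i·arccos((1+|z|²)/2)). -/
noncomputable def Rzero (z : ℂ) : ℂ :=
  z * Complex.exp (Complex.I * (Real.arccos ((1 + ‖z‖ ^ 2) / 2) : ℂ))

/-- For every w ∈ D \ {0}, the hyperbolic triangle with vertices 0, w, R₀(w)
is equilateral: ρ(0,w) = ρ(0,R₀(w)) = ρ(w,R₀(w)). -/
theorem Rzero_equilateral (w : ℂ) (hw : w ∈ Metric.ball (0 : ℂ) 1) (hw0 : w ≠ 0) :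
    hypDist 0 w = hypDist 0 (Rzero w) ∧ hypDist 0 w = hypDist w (Rzero w) := by
  have ht1 : ‖w‖ < 1 := by simpa using Metric.mem_ball.mp hw
  set t := ‖w‖ with htdef
  have ht0 : 0 < t := norm_pos_iff.mpr hw0
  set α : ℝ := Real.arccos ((1 + t ^ 2) / 2) with hα
  have hcos : Real.cos α = (1 + t ^ 2) / 2 :=
    Real.cos_arccos (by nlinarith) (by nlinarith)
  have hsc : Real.sin α ^ 2 + Real.cos α ^ 2 = 1 := Real.sin_sq_add_cos_sq α
  have habse : ‖Complex.exp (Complex.I * (α : ℂ))‖ = 1 := by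
    rw [Complex.norm_exp]; simp
  have hR : Rzero w = w * Complex.exp (Complex.I * (α : ℂ)) := rfl
  have habsR : ‖Rzero w‖ = t := by
    rw [hR, norm_mul, habse, mul_one]
  have he : Complex.exp (Complex.I * (α : ℂ)) = (Real.cos α : ℂ) + (Real.sin α : ℂ) * Complex.I := by
    rw [mul_comm, Complex.exp_mul_I]; simp
  have habs1e : ‖1 - Complex.exp (Complex.I * (α : ℂ))‖ = Real.sqrt (1 - t ^ 2) := by
    have : (1 : ℂ) - Complex.exp (Complex.I * (α : ℂ)) =
        ((1 - Real.cos α : ℝ) : ℂ) + ((-Real.sin α : ℝ) : ℂ) * Complex.I := by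
      rw [he]; push_cast; ring
    rw [this, Complex.norm_add_mul_I]
    congr 1
    nlinarith
  have hconj : (starRingEnd ℂ) (Rzero w) * w =
      ((t ^ 2 : ℝ) : ℂ) * ((Real.cos α : ℂ) - (Real.sin α : ℂ) * Complex.I) := by
    rw [hR, map_mul, he]
    have hnw : (starRingEnd ℂ) w * w = ((t ^ 2 : ℝ) : ℂ) := by
      have h1 : (starRingEnd ℂ) w * w = (Complex.normSq w : ℂ) := by
        rw [mul_comm, Complex.mul_conj]
      rw [h1, Complex.normSq_eq_norm_sq, ← htdef]
    calc (starRingEnd ℂ) w * (starRingEnd ℂ) ((Real.cos α : ℂ) + (Real.sin α : ℂ) * Complex.I) * w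
        = ((starRingEnd ℂ) w * w) * (starRingEnd ℂ) ((Real.cos α : ℂ) + (Real.sin α : ℂ) * Complex.I) := by ring
      _ = ((t ^ 2 : ℝ) : ℂ) * ((Real.cos α : ℂ) - (Real.sin α : ℂ) * Complex.I) := by
          rw [hnw]
          congr 1
          rw [map_add, map_mul, Complex.conj_I, Complex.conj_ofReal, Complex.conj_ofReal]
          ring
  have habsden : ‖1 - (starRingEnd ℂ) (Rzero w) * w‖ = Real.sqrt (1 - t ^ 2) := by
    have : (1 : ℂ) - (starRingEnd ℂ) (Rzero w) * w =
        ((1 - t ^ 2 * Real.cos α : ℝ) : ℂ) + ((t ^ 2 * Real.sin α : ℝ) : ℂ) * Complex.I := by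
      rw [hconj]; push_cast; ring
    rw [this, Complex.norm_add_mul_I]
    congr 1
    rw [hcos]
    have hs : Real.sin α ^ 2 = 1 - ((1 + t ^ 2) / 2) ^ 2 := by nlinarith
    have hs4 : (t ^ 2 * Real.sin α) ^ 2 = t ^ 4 * (1 - ((1 + t ^ 2) / 2) ^ 2) := by
      rw [mul_pow, hs]; ring
    rw [hs4]; ring
  have hsqrt_pos : 0 < Real.sqrt (1 - t ^ 2) := Real.sqrt_pos.mpr (by nlinarith)
  have hkey : ‖(w - Rzero w) / (1 - (starRingEnd ℂ) (Rzero w) * w)‖ = t := by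
    have hnum : w - Rzero w = w * (1 - Complex.exp (Complex.I * (α : ℂ))) := by
      rw [hR]; ring
    rw [norm_div, hnum, norm_mul, ← htdef, habs1e, habsden]
    field_simp
  constructor
  · unfold hypDist
    have h1 : ‖(0 - w) / (1 - (starRingEnd ℂ) w * 0)‖ = t := by
      simp [htdef]
    have h2 : ‖(0 - Rzero w) / (1 - (starRingEnd ℂ) (Rzero w) * 0)‖ = t := by
      simp [habsR]
    rw [h1, h2]
  · unfold hypDist
    have h1 : ‖(0 - w) / (1 - (starRingEnd ℂ) w * 0)‖ = t := by
      simp [htdef]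
    rw [h1, hkey]
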